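/- arXiv:0901.2343 — 3 statements merged into one kernel-verified Lean document; each statement's English description precedes it below -/
import Mathlib

section
/- Let X₁, X₂, … be i.i.d. real-valued random variables and let h : ℝ^m → ℝ (m ≥ 1) be a symmetric Borel-measurable kernel with E|h(X₁,…,X_m)|^{4/3} < ∞. For each n define the centered truncation tail h^{(2)}_n(x₁,…,x_m) = h(x₁,…,x_m)·1{|h(x₁,…,x_m)| > n^{3/2}} − E( h(X₁,…,X_m)·1{|h(X₁,…,X_m)| > n^{3/2}} ). Then n^{-1/2} max_{m ≤ k ≤ n} | k · C(k,m)^{-1} ∑_{1≤i₁<…<i_m≤k} h^{(2)}_n(X_{i₁},…,X_{i_m}) | → 0 in probability as n → ∞. -/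
open MeasureTheory ProbabilityTheory Filter Finset Topology

/-- Sum of the kernel `h` over all increasing `m`-tuples of indices from `{0, …, k-1}`
(the summands of a `U`-statistic). -/
noncomputable def uStatSum {Ω : Type*} (m : ℕ) (h : (Fin m → ℝ) → ℝ)
    (X : ℕ → Ω → ℝ) (k : ℕ) (ω : Ω) : ℝ :=
  ∑ s ∈ ((Finset.range k).powersetCard m).attach,
    h (fun j => X (s.1.orderEmbOfFin (Finset.mem_powersetCard.mp s.2).2 j) ω)

/-- First-order projection of a kernel: `x ↦ E h(x, X₂, …, X_m)` where the `X_i` have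
common law `ν`; this realizes the conditional expectation `E(h(X₁,…,X_m) | X₁ = x)`. -/
noncomputable def proj1 (m : ℕ) (hm : 0 < m) (h : (Fin m → ℝ) → ℝ)
    (ν : Measure ℝ) (x : ℝ) : ℝ :=
  ∫ z, h (Function.update z ⟨0, hm⟩ x) ∂(Measure.pi fun _ : Fin m => ν)

/-- The centered truncation tail of the kernel `h` at level `n^{3/2}`:
`h^{(2)}_n = h · 1{|h| > n^{3/2}} - E(h(X₁,…,X_m) · 1{|h| > n^{3/2}})`. -/
noncomputable def truncTail {Ω : Type*} [MeasurableSpace Ω] (μ : Measure Ω) (m : ℕ)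
    (h : (Fin m → ℝ) → ℝ) (X : ℕ → Ω → ℝ) (n : ℕ) (x : Fin m → ℝ) : ℝ :=
  (if (n : ℝ) ^ ((3 : ℝ) / 2) < |h x| then h x else 0) -
    ∫ ω, (if (n : ℝ) ^ ((3 : ℝ) / 2) < |h (fun j => X j ω)| then h (fun j => X j ω)
      else 0) ∂μ

/-- The centered truncated main part of the kernel `h` at level `n^{3/2}`:
`h^{(1)}_n = h · 1{|h| ≤ n^{3/2}} - E(h(X₁,…,X_m) · 1{|h| ≤ n^{3/2}})`. -/
noncomputable def truncMain {Ω : Type*} [MeasurableSpace Ω] (μ : Measure Ω) (m : ℕ)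
    (h : (Fin m → ℝ) → ℝ) (X : ℕ → Ω → ℝ) (n : ℕ) (x : Fin m → ℝ) : ℝ :=
  (if |h x| ≤ (n : ℝ) ^ ((3 : ℝ) / 2) then h x else 0) -
    ∫ ω, (if |h (fun j => X j ω)| ≤ (n : ℝ) ^ ((3 : ℝ) / 2) then h (fun j => X j ω)
      else 0) ∂μ

lemma map_eq_pi {Ω : Type*} [MeasurableSpace Ω] (μ : Measure Ω) [IsProbabilityMeasure μ]
    (X : ℕ → Ω → ℝ) (hXmeas : ∀ i, Measurable (X i))
    (hindep : iIndepFun X μ)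
    (hident : ∀ i, IdentDistrib (X i) (X 0) μ μ)
    (m : ℕ) (ι : Fin m → ℕ) (hι : Function.Injective ι) :
    μ.map (fun ω j => X (ι j) ω) = Measure.pi (fun _ : Fin m => μ.map (X 0)) := by
  have hmeasvec : Measurable (fun ω (j : Fin m) => X (ι j) ω) :=
    measurable_pi_lambda _ (fun j => hXmeas (ι j))
  have : IsProbabilityMeasure (μ.map (X 0)) := Measure.isProbabilityMeasure_map (hXmeas 0).aemeasurable
  refine (Measure.pi_eq (fun s hs => ?_)).symm
  rw [Measure.map_apply hmeasvec (MeasurableSet.univ_pi hs)]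
  have hpre : (fun ω (j : Fin m) => X (ι j) ω) ⁻¹' (Set.pi Set.univ s)
      = ⋂ j ∈ (Finset.univ : Finset (Fin m)), X (ι j) ⁻¹' s j := by
    ext ω; simp [Set.mem_pi]
  rw [hpre]
  classical
  set sets : ℕ → Set ℝ := fun i => if hj : ∃ j, ι j = i then s hj.choose else Set.univ with hsets
  have hsets_eq : ∀ j : Fin m, sets (ι j) = s j := by
    intro j
    have hj : ∃ j', ι j' = ι j := ⟨j, rfl⟩
    have := hj.choose_spec
    rw [hsets]; simp only [dif_pos hj]
    rw [hι this]
  have hinter : (⋂ j ∈ (Finset.univ : Finset (Fin m)), X (ι j) ⁻¹' s j)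
      = ⋂ i ∈ (Finset.univ : Finset (Fin m)).image ι, X i ⁻¹' sets i := by
    rw [Finset.set_biInter_finset_image]
    exact Set.iInter₂_congr (fun j _ => by rw [hsets_eq])
  rw [hinter]
  rw [hindep.measure_inter_preimage_eq_mul _ (fun i _ => ?_)]
  · rw [Finset.prod_image (fun j _ j' _ hjj => hι hjj)]
    rw [Finset.prod_congr rfl (fun j _ => by rw [hsets_eq])]
    refine Finset.prod_congr rfl (fun j _ => ?_)
    rw [← Measure.map_apply (hXmeas (ι j)) (hs j), (hident (ι j)).map_eq]
  · by_cases hj : ∃ j, ι j = i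
    · rw [hsets]; simp only [dif_pos hj]; exact hs _
    · rw [hsets]; simp only [dif_neg hj]; exact MeasurableSet.univ

lemma sup_mem_of_nonempty {s : Finset ℕ} (hs : s.Nonempty) : s.sup id ∈ s := by
  have := s.max'_mem hs
  rwa [Finset.max'_eq_sup', Finset.sup'_eq_sup] at this

lemma fiber_card (m n j : ℕ) (hm : 0 < m) (hj : j ∈ Finset.range n) :
    (((Finset.range n).powersetCard m).filter (fun s => s.sup id = j)).card
      = j.choose (m - 1) := by
  classical
  have hcpc := Finset.card_powersetCard (m-1) (Finset.range j)
  rw [Finset.card_range] at hcpc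
  rw [← hcpc]
  refine Finset.card_bij' (fun s _ => s.erase j) (fun t _ => insert j t) ?hi ?hj ?li ?ri
  case hi =>
    intro s hs
    simp only [Finset.mem_filter, Finset.mem_powersetCard] at hs
    obtain ⟨⟨hsub, hcard⟩, hsup⟩ := hs
    have hne : s.Nonempty := Finset.card_pos.mp (hcard ▸ hm)
    have hjs : j ∈ s := hsup ▸ sup_mem_of_nonempty hne
    rw [Finset.mem_powersetCard]
    constructor
    · intro x hx
      rw [Finset.mem_erase] at hx
      rw [Finset.mem_range]
      exact lt_of_le_of_ne (hsup ▸ Finset.le_sup (f := id) hx.2) hx.1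
    · rw [Finset.card_erase_of_mem hjs, hcard]
  case hj =>
    intro t ht
    rw [Finset.mem_powersetCard] at ht
    obtain ⟨hsub, hcard⟩ := ht
    have hjt : j ∉ t := fun hx => lt_irrefl j (Finset.mem_range.mp (hsub hx))
    simp only [Finset.mem_filter, Finset.mem_powersetCard]
    refine ⟨⟨?_, ?_⟩, ?_⟩
    · intro x hx
      rcases Finset.mem_insert.mp hx with rfl | hx
      · exact hj
      · exact Finset.mem_range.mpr (lt_trans (Finset.mem_range.mp (hsub hx)) (Finset.mem_range.mp hj))
    · rw [Finset.card_insert_of_notMem hjt, hcard]; omega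
    · rw [Finset.sup_insert]
      have : t.sup id ≤ j := Finset.sup_le (fun x hx => le_of_lt (Finset.mem_range.mp (hsub hx)))
      simpa using this
  case li =>
    intro s hs
    simp only [Finset.mem_filter, Finset.mem_powersetCard] at hs
    obtain ⟨⟨hsub, hcard⟩, hsup⟩ := hs
    have hne : s.Nonempty := Finset.card_pos.mp (hcard ▸ hm)
    exact Finset.insert_erase (hsup ▸ sup_mem_of_nonempty hne)
  case ri =>
    intro t ht
    rw [Finset.mem_powersetCard] at ht
    exact Finset.erase_insert (fun hx => lt_irrefl j (Finset.mem_range.mp (ht.1 hx)))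

lemma comb_sum (m n : ℕ) (hm : 0 < m) :
    ∑ s ∈ (Finset.range n).powersetCard m,
      ((s.sup id + 1 : ℕ) : ℝ) / (((s.sup id + 1).choose m : ℕ) : ℝ) ≤ m * n := by
  classical
  rw [← Finset.sum_fiberwise_of_maps_to (g := fun s : Finset ℕ => s.sup id)
    (t := Finset.range n) ?_]
  · calc ∑ j ∈ Finset.range n, ∑ s ∈ ((Finset.range n).powersetCard m).filter
          (fun s => s.sup id = j), ((s.sup id + 1 : ℕ) : ℝ) / (((s.sup id + 1).choose m : ℕ) : ℝ)
        ≤ ∑ j ∈ Finset.range n, (m : ℝ) := by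
          apply Finset.sum_le_sum
          intro j hj
          have hcongr : ∀ s ∈ ((Finset.range n).powersetCard m).filter (fun s => s.sup id = j),
              ((s.sup id + 1 : ℕ) : ℝ) / (((s.sup id + 1).choose m : ℕ) : ℝ)
                = ((j + 1 : ℕ) : ℝ) / (((j + 1).choose m : ℕ) : ℝ) := by
            intro s hs
            rw [(Finset.mem_filter.mp hs).2]
          rw [Finset.sum_congr rfl hcongr, Finset.sum_const, fiber_card m n j hm hj,
            nsmul_eq_mul]
          by_cases hc : (j + 1).choose m = 0
          · rw [hc]; simp
          · have hc0 : (0:ℝ) < (((j+1).choose m : ℕ) : ℝ) := by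
              exact_mod_cast Nat.pos_of_ne_zero hc
            have key : (j + 1) * j.choose (m - 1) = (j + 1).choose m * m := by
              have h2 := Nat.add_one_mul_choose_eq j (m - 1)
              have h3 : m - 1 + 1 = m := by omega
              rw [h3] at h2
              exact h2
            have keyR : (j.choose (m-1) : ℝ) * ((j + 1 : ℕ) : ℝ)
                = (m : ℝ) * (((j+1).choose m : ℕ) : ℝ) := by
              exact_mod_cast (by linarith [key] : j.choose (m-1) * (j+1) = m * ((j+1).choose m))
            rw [mul_div_assoc']
            rw [keyR, mul_div_assoc, div_self (ne_of_gt hc0), mul_one]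
      _ = m * n := by rw [Finset.sum_const, nsmul_eq_mul, Finset.card_range]; ring
  · intro s hs
    rw [Finset.mem_powersetCard] at hs
    have hne : s.Nonempty := Finset.card_pos.mp (hs.2 ▸ hm)
    exact hs.1 (sup_mem_of_nonempty hne)

lemma coeff_step (m b : ℕ) (hm : 0 < m) (hb : m ≤ b) :
    (b + 1) * b.choose m ≤ b * (b+1).choose m := by
  obtain ⟨m', rfl⟩ : ∃ m', m = m' + 1 := ⟨m - 1, (Nat.succ_pred_eq_of_pos hm).symm⟩
  have h1 : (b+1).choose (m'+1) = b.choose m' + b.choose (m'+1) := Nat.choose_succ_succ b m'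
  have h2 : b.choose (m'+1) * (m'+1) = b.choose m' * (b - m') := Nat.choose_succ_right_eq b m'
  have h3 : b.choose (m'+1) ≤ b * b.choose m' := by
    calc b.choose (m'+1) ≤ b.choose (m'+1) * (m'+1) := Nat.le_mul_of_pos_right _ (Nat.succ_pos m')
      _ = b.choose m' * (b - m') := h2
      _ ≤ b.choose m' * b := Nat.mul_le_mul_left _ (Nat.sub_le _ _)
      _ = b * b.choose m' := Nat.mul_comm _ _
  calc (b+1) * b.choose (m'+1) = b * b.choose (m'+1) + b.choose (m'+1) := by ring
    _ ≤ b * b.choose (m'+1) + b * b.choose m' := by omega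
    _ = b * (b.choose m' + b.choose (m'+1)) := by ring
    _ = b * (b+1).choose (m'+1) := by rw [h1]

lemma coeff_anti (m a b : ℕ) (hm : 0 < m) (ha : m ≤ a) (hab : a ≤ b) :
    (b : ℝ) * ((b.choose m : ℕ) : ℝ)⁻¹ ≤ (a : ℝ) * ((a.choose m : ℕ) : ℝ)⁻¹ := by
  induction b, hab using Nat.le_induction with
  | base => exact le_refl _
  | succ b hab ih =>
    refine le_trans ?_ ih
    have hmb : m ≤ b := le_trans ha hab
    have hcbR : (0:ℝ) < ((b.choose m : ℕ) : ℝ) := by exact_mod_cast Nat.choose_pos hmb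
    have hcb1R : (0:ℝ) < (((b+1).choose m : ℕ) : ℝ) := by
      exact_mod_cast Nat.choose_pos (le_trans hmb (Nat.le_succ b))
    rw [← div_eq_mul_inv, ← div_eq_mul_inv, div_le_div_iff₀ hcb1R hcbR]
    have := coeff_step m b hm hmb
    push_cast
    exact_mod_cast this

lemma tail_rpow_bound (n : ℕ) (y : ℝ) (hn : 1 ≤ n) (hy : (n:ℝ) ^ ((3:ℝ)/2) < y) :
    y ≤ (Real.sqrt n)⁻¹ * y ^ ((4:ℝ)/3) := by
  have hn0 : (0:ℝ) ≤ n := Nat.cast_nonneg n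
  have hn1 : (1:ℝ) ≤ (n:ℝ) := by exact_mod_cast hn
  have h1 : (1:ℝ) ≤ (n:ℝ) ^ ((3:ℝ)/2) := Real.one_le_rpow hn1 (by norm_num)
  have hy0 : (0:ℝ) < y := lt_of_lt_of_le zero_lt_one (le_of_lt (lt_of_le_of_lt h1 hy))
  have hsq : Real.sqrt n = (n:ℝ) ^ ((1:ℝ)/2) := Real.sqrt_eq_rpow _
  have hsq0 : (0:ℝ) < Real.sqrt n := Real.sqrt_pos.mpr (lt_of_lt_of_le zero_lt_one hn1)
  have h2 : (n:ℝ) ^ ((1:ℝ)/2) ≤ y ^ ((1:ℝ)/3) := by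
    calc (n:ℝ) ^ ((1:ℝ)/2) = ((n:ℝ) ^ ((3:ℝ)/2)) ^ ((1:ℝ)/3) := by
          rw [← Real.rpow_mul hn0]; norm_num
      _ ≤ y ^ ((1:ℝ)/3) := Real.rpow_le_rpow (Real.rpow_nonneg hn0 _) hy.le (by norm_num)
  have key : Real.sqrt n * y ≤ y ^ ((4:ℝ)/3) := by
    have h43 : (4:ℝ)/3 = 1/3 + 1 := by norm_num
    rw [h43, Real.rpow_add hy0, Real.rpow_one, hsq]
    exact mul_le_mul_of_nonneg_right h2 hy0.le
  rw [inv_mul_eq_div, le_div_iff₀ hsq0]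
  linarith [key]

lemma abs_le_one_add_rpow (y : ℝ) (hy : 0 ≤ y) : y ≤ 1 + y ^ ((4:ℝ)/3) := by
  rcases le_or_gt y 1 with hle | hlt
  · have := Real.rpow_nonneg hy ((4:ℝ)/3)
    linarith
  · have h2 : y ^ (1:ℝ) ≤ y ^ ((4:ℝ)/3) :=
      Real.rpow_le_rpow_of_exponent_le hlt.le (by norm_num)
    rw [Real.rpow_one] at h2
    linarith

/-- For i.i.d. `X_i` and a symmetric measurable kernel `h` of order
`m ≥ 1` with `E|h|^{4/3} < ∞`, the maximal `U`-statistic built from the centered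
truncation tails `h^{(2)}_n` satisfies
`n^{-1/2} max_{m ≤ k ≤ n} | k C(k,m)^{-1} ∑_{C(k,m)} h^{(2)}_n(X_{i₁},…,X_{i_m}) | → 0`
in probability. -/
theorem stmt_8 {Ω : Type*} [MeasurableSpace Ω] (μ : Measure Ω) [IsProbabilityMeasure μ]
    (X : ℕ → Ω → ℝ) (hXmeas : ∀ i, Measurable (X i))
    (hindep : iIndepFun X μ)
    (hident : ∀ i, IdentDistrib (X i) (X 0) μ μ)
    (m : ℕ) (hm : 0 < m) (h : (Fin m → ℝ) → ℝ) (hhmeas : Measurable h)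
    (hsymm : ∀ (σ : Equiv.Perm (Fin m)) (x : Fin m → ℝ), h (x ∘ σ) = h x)
    (hmom : Integrable (fun ω => |h (fun j => X j ω)| ^ ((4 : ℝ) / 3)) μ) :
    TendstoInMeasure μ
      (fun (n : ℕ) ω => (Real.sqrt n)⁻¹ *
        ⨆ k ∈ Finset.Icc m n,
          |(k : ℝ) * ((k.choose m : ℝ))⁻¹ * uStatSum m (truncTail μ m h X n) X k ω|)
      atTop (fun _ => 0) := by
  classical
  have hXvec : Measurable (fun ω (j : Fin m) => X (j : ℕ) ω) :=
    measurable_pi_lambda _ (fun j => hXmeas j)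
  set g : ℕ → (Fin m → ℝ) → ℝ :=
    fun n x => if (n:ℝ) ^ ((3:ℝ)/2) < |h x| then h x else 0 with hgdef
  have hgmeas : ∀ n, Measurable (g n) := fun n =>
    Measurable.ite (measurableSet_lt measurable_const hhmeas.abs) hhmeas measurable_const
  have hgabs : ∀ n x, |g n x| ≤ |h x| := by
    intro n x
    rw [hgdef]; dsimp only
    split
    · exact le_refl _
    · simp [abs_nonneg]
  have hTeq : ∀ n x, truncTail μ m h X n x = g n x - ∫ ω, g n (fun j => X j ω) ∂μ :=
    fun n x => rfl
  have hTmeas : ∀ n, Measurable (truncTail μ m h X n) := by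
    intro n
    have : truncTail μ m h X n = fun x => g n x - ∫ ω, g n (fun j => X j ω) ∂μ := funext (hTeq n)
    rw [this]
    exact (hgmeas n).sub measurable_const
  -- integrability of |h ∘ X|
  have habs_int : Integrable (fun ω => |h (fun j => X j ω)|) μ := by
    refine Integrable.mono' ((integrable_const (1:ℝ)).add hmom)
      ((hhmeas.comp hXvec).abs.aestronglyMeasurable) (ae_of_all _ (fun ω => ?_))
    rw [Real.norm_eq_abs, abs_abs]
    exact abs_le_one_add_rpow _ (abs_nonneg _)
  have hg_int : ∀ n, Integrable (fun ω => g n (fun j => X j ω)) μ := by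
    intro n
    refine Integrable.mono' habs_int ((hgmeas n).comp hXvec).aestronglyMeasurable
      (ae_of_all _ (fun ω => ?_))
    rw [Real.norm_eq_abs]
    exact hgabs n _
  have hT_int : ∀ n, Integrable (fun ω => truncTail μ m h X n (fun j => X j ω)) μ := by
    intro n
    have := (hg_int n).sub (integrable_const (∫ ω, g n (fun j => X j ω) ∂μ))
    refine this.congr (ae_of_all _ (fun ω => ?_))
    simp only [Pi.sub_apply]
    exact (hTeq n _).symm
  -- the tail quantity E n
  set tail : ℕ → Ω → ℝ := fun n ω =>
    if (n:ℝ) ^ ((3:ℝ)/2) < |h (fun j => X j ω)| then |h (fun j => X j ω)| ^ ((4:ℝ)/3) else 0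
    with htaildef
  have htail_meas : ∀ n, Measurable (tail n) := by
    intro n
    refine Measurable.ite ?_ (((hhmeas.comp hXvec).abs).pow_const _) measurable_const
    exact measurableSet_lt measurable_const (hhmeas.comp hXvec).abs
  have htail_nonneg : ∀ n ω, 0 ≤ tail n ω := by
    intro n ω
    rw [htaildef]; dsimp only
    split
    · exact Real.rpow_nonneg (abs_nonneg _) _
    · exact le_refl _
  have htail_le : ∀ n ω, tail n ω ≤ |h (fun j => X j ω)| ^ ((4:ℝ)/3) := by
    intro n ω
    rw [htaildef]; dsimp only
    split
    · exact le_refl _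
    · exact Real.rpow_nonneg (abs_nonneg _) _
  have htail_int : ∀ n, Integrable (tail n) μ := by
    intro n
    refine Integrable.mono' hmom (htail_meas n).aestronglyMeasurable
      (ae_of_all _ (fun ω => ?_))
    rw [Real.norm_eq_abs, abs_of_nonneg (htail_nonneg n ω)]
    exact htail_le n ω
  set E : ℕ → ℝ := fun n => ∫ ω, tail n ω ∂μ with hEdef
  have hE_nonneg : ∀ n, 0 ≤ E n := fun n => integral_nonneg (htail_nonneg n)
  have hE0 : Tendsto E atTop (𝓝 0) := by
    have key := MeasureTheory.tendsto_integral_of_dominated_convergence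
      (F := fun n ω => tail n ω) (f := fun _ => (0:ℝ))
      (bound := fun ω => |h (fun j => X j ω)| ^ ((4:ℝ)/3))
      (fun n => (htail_meas n).aestronglyMeasurable) hmom
      (fun n => ae_of_all _ (fun ω => by
        rw [Real.norm_eq_abs, abs_of_nonneg (htail_nonneg n ω)]
        exact htail_le n ω))
      (ae_of_all _ (fun ω => ?_))
    · simpa using key
    · -- pointwise tendsto to 0
      have hev : ∀ᶠ n in atTop, tail n ω = 0 := by
        filter_upwards [eventually_ge_atTop (max 1 ⌈|h (fun j => X j ω)|⌉₊)] with n hn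
        have hn1 : 1 ≤ n := le_trans (le_max_left _ _) hn
        have hy : |h (fun j => X j ω)| ≤ (n:ℝ) := by
          calc |h (fun j => X j ω)| ≤ (⌈|h (fun j => X j ω)|⌉₊ : ℝ) := Nat.le_ceil _
            _ ≤ (n:ℝ) := by exact_mod_cast le_trans (le_max_right _ _) hn
        have hnn : (n:ℝ) ≤ (n:ℝ) ^ ((3:ℝ)/2) := by
          have hn1R : (1:ℝ) ≤ (n:ℝ) := by exact_mod_cast hn1
          calc (n:ℝ) = (n:ℝ) ^ (1:ℝ) := (Real.rpow_one _).symm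
            _ ≤ (n:ℝ) ^ ((3:ℝ)/2) := Real.rpow_le_rpow_of_exponent_le hn1R (by norm_num)
        rw [htaildef]; dsimp only
        rw [if_neg (not_lt.mpr (le_trans hy hnn))]
      exact Tendsto.congr' (by filter_upwards [hev] with n hn; rw [hn]) tendsto_const_nhds
  -- integral bound on |g n|
  have hg_bound : ∀ n, 1 ≤ n →
      ∫ ω, |g n (fun j => X j ω)| ∂μ ≤ (Real.sqrt n)⁻¹ * E n := by
    intro n hn
    rw [hEdef]; dsimp only
    rw [← integral_const_mul]
    refine integral_mono ((hg_int n).abs) ((htail_int n).const_mul _) (fun ω => ?_)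
    rw [hgdef, htaildef]; dsimp only
    by_cases hc : (n:ℝ) ^ ((3:ℝ)/2) < |h (fun j => X j ω)|
    · rw [if_pos hc, if_pos hc]
      exact tail_rpow_bound n _ hn hc
    · rw [if_neg hc, if_neg hc, abs_zero, mul_zero]
  -- integral bound on |T n|
  have hT_bound : ∀ n, ∫ ω, |truncTail μ m h X n (fun j => X j ω)| ∂μ
      ≤ 2 * ∫ ω, |g n (fun j => X j ω)| ∂μ := by
    intro n
    set c := ∫ ω, g n (fun j => X j ω) ∂μ with hcdef
    have hc : |c| ≤ ∫ ω, |g n (fun j => X j ω)| ∂μ := by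
      rw [hcdef]
      have := norm_integral_le_integral_norm (μ := μ) (fun ω => g n (fun j => X j ω))
      simpa [Real.norm_eq_abs] using this
    calc ∫ ω, |truncTail μ m h X n (fun j => X j ω)| ∂μ
        ≤ ∫ ω, (|g n (fun j => X j ω)| + |c|) ∂μ := by
          refine integral_mono ((hT_int n).abs) ((hg_int n).abs.add (integrable_const _))
            (fun ω => ?_)
          rw [hTeq]
          exact abs_sub _ _
      _ = (∫ ω, |g n (fun j => X j ω)| ∂μ) + |c| := by
          rw [integral_add ((hg_int n).abs) (integrable_const _), integral_const]
          simp
      _ ≤ 2 * ∫ ω, |g n (fun j => X j ω)| ∂μ := by linarith [hc]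
  -- identical distribution of sub-vectors
  have hident_vec : ∀ (ι : Fin m → ℕ), Function.Injective ι →
      IdentDistrib (fun ω j => X (ι j) ω) (fun ω (j : Fin m) => X (j : ℕ) ω) μ μ := by
    intro ι hι
    refine ⟨(measurable_pi_lambda _ (fun j => hXmeas (ι j))).aemeasurable,
      hXvec.aemeasurable, ?_⟩
    rw [map_eq_pi μ X hXmeas hindep hident m ι hι,
      map_eq_pi μ X hXmeas hindep hident m (fun j : Fin m => (j : ℕ))
        (fun a b hab => Fin.ext (by exact_mod_cast hab))]
  -- the subset-indexed summands
  set F : ℕ → Finset ℕ → Ω → ℝ := fun n s ω =>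
    if hc : s.card = m then truncTail μ m h X n (fun j => X (s.orderEmbOfFin hc j) ω) else 0
    with hFdef
  have hF_ident : ∀ n (s : Finset ℕ) (hc : s.card = m),
      IdentDistrib (F n s) (fun ω => truncTail μ m h X n (fun j => X (j : ℕ) ω)) μ μ := by
    intro n s hc
    have h1 : F n s = fun ω => truncTail μ m h X n (fun j => X (s.orderEmbOfFin hc j) ω) := by
      funext ω; rw [hFdef]; dsimp only; rw [dif_pos hc]
    rw [h1]
    exact (hident_vec (fun j => s.orderEmbOfFin hc j) (s.orderEmbOfFin hc).injective).comp
      (hTmeas n)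
  have hF_int : ∀ n s, Integrable (F n s) μ := by
    intro n s
    by_cases hc : s.card = m
    · exact ((hF_ident n s hc).integrable_iff).mpr (hT_int n)
    · have : F n s = fun _ => 0 := by
        funext ω; rw [hFdef]; dsimp only; rw [dif_neg hc]
      rw [this]; exact integrable_const 0
  have hF_abs : ∀ n s (hc : s.card = m),
      ∫ ω, |F n s ω| ∂μ = ∫ ω, |truncTail μ m h X n (fun j => X j ω)| ∂μ :=
    fun n s hc => ((hF_ident n s hc).comp measurable_abs).integral_eq
  -- coefficient
  set c : Finset ℕ → ℝ :=
    fun s => ((s.sup id + 1 : ℕ) : ℝ) / (((s.sup id + 1).choose m : ℕ) : ℝ) with hcdef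
  have hc_nonneg : ∀ s, 0 ≤ c s := fun s => div_nonneg (Nat.cast_nonneg _) (Nat.cast_nonneg _)
  -- dominating function
  set D : ℕ → Ω → ℝ := fun n ω => (Real.sqrt n)⁻¹ *
    ∑ s ∈ (Finset.range n).powersetCard m, c s * |F n s ω| with hDdef
  have hD_nonneg : ∀ n ω, 0 ≤ D n ω := by
    intro n ω
    exact mul_nonneg (inv_nonneg.mpr (Real.sqrt_nonneg _))
      (Finset.sum_nonneg (fun s _ => mul_nonneg (hc_nonneg s) (abs_nonneg _)))
  have hD_int : ∀ n, Integrable (D n) μ := by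
    intro n
    refine Integrable.const_mul ?_ _
    exact integrable_finset_sum _ (fun s hs => ((hF_int n s).abs.const_mul _))
  -- Step A : pointwise domination
  have hstep : ∀ (n : ℕ) (ω : Ω), (Real.sqrt n)⁻¹ *
      (⨆ k ∈ Finset.Icc m n,
        |(k : ℝ) * ((k.choose m : ℝ))⁻¹ * uStatSum m (truncTail μ m h X n) X k ω|)
      ≤ D n ω := by
    intro n ω
    rw [hDdef]; dsimp only
    refine mul_le_mul_of_nonneg_left ?_ (inv_nonneg.mpr (Real.sqrt_nonneg _))
    have hsum_nonneg : 0 ≤ ∑ s ∈ (Finset.range n).powersetCard m, c s * |F n s ω| :=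
      Finset.sum_nonneg (fun s _ => mul_nonneg (hc_nonneg s) (abs_nonneg _))
    refine Real.iSup_le (fun k => Real.iSup_le (fun hk => ?_) hsum_nonneg) hsum_nonneg
    rw [Finset.mem_Icc] at hk
    have husum : uStatSum m (truncTail μ m h X n) X k ω
        = ∑ s ∈ (Finset.range k).powersetCard m, F n s ω := by
      rw [uStatSum, ← Finset.sum_attach ((Finset.range k).powersetCard m) (fun s => F n s ω)]
      refine Finset.sum_congr rfl (fun s _ => ?_)
      rw [hFdef]; dsimp only
      rw [dif_pos (Finset.mem_powersetCard.mp s.2).2]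
    rw [husum]
    have hcoef : ∀ s ∈ (Finset.range k).powersetCard m,
        (k : ℝ) * ((k.choose m : ℝ))⁻¹ ≤ c s := by
      intro s hs
      rw [Finset.mem_powersetCard] at hs
      obtain ⟨hsub, hcard⟩ := hs
      have hne : s.Nonempty := Finset.card_pos.mp (hcard ▸ hm)
      have hjk : s.sup id + 1 ≤ k :=
        Nat.succ_le_of_lt (Finset.mem_range.mp (hsub (sup_mem_of_nonempty hne)))
      have hmj : m ≤ s.sup id + 1 := by
        have hsub2 : s ⊆ Finset.range (s.sup id + 1) := by
          intro x hx
          exact Finset.mem_range.mpr (Nat.lt_succ_of_le (Finset.le_sup (f := id) hx))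
        calc m = s.card := hcard.symm
          _ ≤ (Finset.range (s.sup id + 1)).card := Finset.card_le_card hsub2
          _ = s.sup id + 1 := Finset.card_range _
      have := coeff_anti m (s.sup id + 1) k hm hmj hjk
      rw [hcdef]; dsimp only
      rw [div_eq_mul_inv]
      exact_mod_cast this
    calc |(k : ℝ) * ((k.choose m : ℝ))⁻¹ * ∑ s ∈ (Finset.range k).powersetCard m, F n s ω|
        ≤ ∑ s ∈ (Finset.range k).powersetCard m,
            (k : ℝ) * ((k.choose m : ℝ))⁻¹ * |F n s ω| := by
          rw [abs_mul]
          have hk0 : (0:ℝ) ≤ (k:ℝ) * ((k.choose m : ℝ))⁻¹ := by positivity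
          rw [abs_of_nonneg hk0]
          calc (k:ℝ) * ((k.choose m : ℝ))⁻¹ * |∑ s ∈ (Finset.range k).powersetCard m, F n s ω|
              ≤ (k:ℝ) * ((k.choose m : ℝ))⁻¹ *
                  ∑ s ∈ (Finset.range k).powersetCard m, |F n s ω| :=
                mul_le_mul_of_nonneg_left (Finset.abs_sum_le_sum_abs _ _) hk0
            _ = ∑ s ∈ (Finset.range k).powersetCard m,
                  (k:ℝ) * ((k.choose m : ℝ))⁻¹ * |F n s ω| := Finset.mul_sum _ _ _
      _ ≤ ∑ s ∈ (Finset.range k).powersetCard m, c s * |F n s ω| :=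
          Finset.sum_le_sum (fun s hs =>
            mul_le_mul_of_nonneg_right (hcoef s hs) (abs_nonneg _))
      _ ≤ ∑ s ∈ (Finset.range n).powersetCard m, c s * |F n s ω| :=
          Finset.sum_le_sum_of_subset_of_nonneg
            (Finset.powersetCard_mono (Finset.range_subset_range.mpr hk.2))
            (fun s _ _ => mul_nonneg (hc_nonneg s) (abs_nonneg _))
  -- Step C : integral of D
  have hD_integral : ∀ n, 1 ≤ n → ∫ ω, D n ω ∂μ ≤ 2 * m * E n := by
    intro n hn
    have hsqn : Real.sqrt n * Real.sqrt n = (n:ℝ) := Real.mul_self_sqrt (Nat.cast_nonneg n)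
    have hsq0 : (0:ℝ) < Real.sqrt n := Real.sqrt_pos.mpr (by exact_mod_cast hn)
    have hIs : ∫ ω, ∑ s ∈ (Finset.range n).powersetCard m, c s * |F n s ω| ∂μ
        = ∑ s ∈ (Finset.range n).powersetCard m,
            c s * ∫ ω, |F n s ω| ∂μ := by
      rw [integral_finset_sum _ (fun s hs => ((hF_int n s).abs.const_mul _))]
      exact Finset.sum_congr rfl (fun s _ => integral_const_mul _ _)
    have hI_bound : ∫ ω, |truncTail μ m h X n (fun j => X j ω)| ∂μ
        ≤ 2 * ((Real.sqrt n)⁻¹ * E n) :=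
      le_trans (hT_bound n) (by linarith [hg_bound n hn])
    have hI_nonneg : 0 ≤ ∫ ω, |truncTail μ m h X n (fun j => X j ω)| ∂μ :=
      integral_nonneg (fun ω => abs_nonneg _)
    have hsum_bound : ∑ s ∈ (Finset.range n).powersetCard m, c s * ∫ ω, |F n s ω| ∂μ
        ≤ (m * n) * (2 * ((Real.sqrt n)⁻¹ * E n)) := by
      calc ∑ s ∈ (Finset.range n).powersetCard m, c s * ∫ ω, |F n s ω| ∂μ
          = ∑ s ∈ (Finset.range n).powersetCard m,
              c s * ∫ ω, |truncTail μ m h X n (fun j => X j ω)| ∂μ := by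
            refine Finset.sum_congr rfl (fun s hs => ?_)
            rw [hF_abs n s (Finset.mem_powersetCard.mp hs).2]
        _ = (∑ s ∈ (Finset.range n).powersetCard m, c s) *
              ∫ ω, |truncTail μ m h X n (fun j => X j ω)| ∂μ := by
            rw [Finset.sum_mul]
        _ ≤ (m * n) * (2 * ((Real.sqrt n)⁻¹ * E n)) := by
            refine mul_le_mul (comb_sum m n hm) hI_bound hI_nonneg (by positivity)
    rw [hDdef]; dsimp only
    rw [integral_const_mul, hIs]
    calc (Real.sqrt n)⁻¹ * ∑ s ∈ (Finset.range n).powersetCard m, c s * ∫ ω, |F n s ω| ∂μ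
        ≤ (Real.sqrt n)⁻¹ * ((m * n) * (2 * ((Real.sqrt n)⁻¹ * E n))) :=
          mul_le_mul_of_nonneg_left hsum_bound (inv_nonneg.mpr (Real.sqrt_nonneg _))
      _ = 2 * m * E n * ((Real.sqrt n)⁻¹ * (Real.sqrt n)⁻¹ * n) := by ring
      _ = 2 * m * E n := by
          have hne : (n:ℝ) ≠ 0 := by
            have : (0:ℝ) < n := by exact_mod_cast hn
            exact ne_of_gt this
          rw [← mul_inv, hsqn, inv_mul_cancel₀ hne, mul_one]
  -- Step D : conclusion
  rw [tendstoInMeasure_iff_dist]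
  intro ε hε
  have key : ∀ (n : ℕ), μ {ω | ε ≤ dist ((Real.sqrt n)⁻¹ *
      (⨆ k ∈ Finset.Icc m n,
        |(k : ℝ) * ((k.choose m : ℝ))⁻¹ * uStatSum m (truncTail μ m h X n) X k ω|) ) 0}
      ≤ ENNReal.ofReal ((∫ ω, D n ω ∂μ) / ε) := by
    intro n
    refine le_trans (measure_mono (?_ : _ ⊆ {ω | ε ≤ D n ω})) ?_
    · intro ω hω
      simp only [Set.mem_setOf_eq] at hω ⊢
      rw [Real.dist_eq, sub_zero] at hω
      have hnn : 0 ≤ (Real.sqrt n)⁻¹ *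
          (⨆ k ∈ Finset.Icc m n,
            |(k : ℝ) * ((k.choose m : ℝ))⁻¹ * uStatSum m (truncTail μ m h X n) X k ω|) :=
        mul_nonneg (inv_nonneg.mpr (Real.sqrt_nonneg _))
          (Real.iSup_nonneg (fun k => Real.iSup_nonneg (fun _ => abs_nonneg _)))
      rw [abs_of_nonneg hnn] at hω
      exact le_trans hω (hstep n ω)
    · have hmk := mul_meas_ge_le_integral_of_nonneg
        (ae_of_all μ (fun ω => hD_nonneg n ω)) (hD_int n) ε
      have hfin : μ {ω | ε ≤ D n ω} ≠ ⊤ := measure_ne_top μ _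
      rw [← ENNReal.ofReal_toReal hfin]
      apply ENNReal.ofReal_le_ofReal
      rw [le_div_iff₀ hε]
      calc (μ {ω | ε ≤ D n ω}).toReal * ε = ε * (μ {ω | ε ≤ D n ω}).toReal := mul_comm _ _
        _ ≤ ∫ ω, D n ω ∂μ := hmk
  refine tendsto_of_tendsto_of_tendsto_of_le_of_le'
    (h := fun n => ENNReal.ofReal ((2*(m:ℝ)*E n)/ε)) tendsto_const_nhds ?_
    (Eventually.of_forall (fun n => zero_le)) ?_
  · have h1 : Tendsto (fun n => (2*(m:ℝ)*E n)/ε) atTop (𝓝 0) := by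
      have := (hE0.const_mul (2*(m:ℝ))).div_const ε
      simpa using this
    have h2 := ENNReal.tendsto_ofReal h1
    simpa using h2
  · filter_upwards [eventually_ge_atTop 1] with n hn
    refine le_trans (key n) (ENNReal.ofReal_le_ofReal ?_)
    have := hD_integral n hn
    gcongr
end

section
/- Let X₁, X₂, … be i.i.d. real-valued random variables and let h : ℝ^m → ℝ (m ≥ 1) be a symmetric Borel-measurable kernel with E|h(X₁,…,X_m)|^{4/3} < ∞. For each n define h^{(2)}_n(x₁,…,x_m) = h(x₁,…,x_m)·1{|h(x₁,…,x_m)| > n^{3/2}} − E( h(X₁,…,X_m)·1{|h(X₁,…,X_m)| > n^{3/2}} ) and its first-order projection h̃^{(2)}_n(x) = E( h^{(2)}_n(X₁,…,X_m) | X₁ = x ). Then n^{-1/2} max_{m ≤ k ≤ n} | k · C(k,m)^{-1} ∑_{1≤i₁<…<i_m≤k} ( h̃^{(2)}_n(X_{i₁}) + … + h̃^{(2)}_n(X_{i_m}) ) | → 0 in probability as n → ∞. -/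
open MeasureTheory ProbabilityTheory Filter Finset Topology

open scoped ENNReal

section AuxStmt9

noncomputable def trn (m : ℕ) (h : (Fin m → ℝ) → ℝ) (n : ℕ) (y : Fin m → ℝ) : ℝ :=
  if (n:ℝ)^((3:ℝ)/2) < |h y| then h y else 0


lemma sum_orderEmbOfFin_eq {m : ℕ} (s : Finset ℕ) (hs : s.card = m) (f : ℕ → ℝ) :
    ∑ j : Fin m, f (s.orderEmbOfFin hs j) = ∑ i ∈ s, f i := by
  refine Finset.sum_nbij (fun j => s.orderEmbOfFin hs j)
    (fun j _ => s.orderEmbOfFin_mem hs j) ?_ ?_ (fun _ _ => rfl)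
  · exact fun a _ b _ hab => (s.orderEmbOfFin hs).injective hab
  · intro i hi
    have := s.range_orderEmbOfFin hs
    have : (i : ℕ) ∈ Set.range (s.orderEmbOfFin hs) := by rw [this]; exact_mod_cast hi
    obtain ⟨j, hj⟩ := this
    exact ⟨j, by simp, hj⟩

lemma filter_powersetCard_card (A : Finset ℕ) (i : ℕ) (hi : i ∈ A) (p : ℕ) :
    ((A.powersetCard (p+1)).filter (fun s => i ∈ s)).card = (A.card - 1).choose p := by
  classical
  have : ((A.powersetCard (p+1)).filter (fun s => i ∈ s)).card
      = ((A.erase i).powersetCard p).card := by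
    refine Finset.card_nbij' (fun s => s.erase i) (fun t => insert i t) ?_ ?_ ?_ ?_
    · intro s hs
      simp only [Finset.mem_coe, Finset.mem_filter, Finset.mem_powersetCard] at hs
      refine Finset.mem_powersetCard.2 ⟨Finset.erase_subset_erase _ hs.1.1, ?_⟩
      rw [Finset.card_erase_of_mem hs.2, hs.1.2]
      rfl
    · intro t ht
      simp only [Finset.mem_coe, Finset.mem_powersetCard] at ht
      have hit : i ∉ t := fun hmem => (Finset.notMem_erase i A) (ht.1 hmem)
      refine Finset.mem_filter.2 ⟨Finset.mem_powersetCard.2 ⟨?_, ?_⟩, Finset.mem_insert_self _ _⟩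
      · exact Finset.insert_subset hi (ht.1.trans (Finset.erase_subset _ _))
      · rw [Finset.card_insert_of_notMem hit, ht.2]
    · intro s hs
      simp only [Finset.mem_coe, Finset.mem_filter] at hs
      exact Finset.insert_erase hs.2
    · intro t ht
      simp only [Finset.mem_coe, Finset.mem_powersetCard] at ht
      have hit : i ∉ t := fun hmem => (Finset.notMem_erase i A) (ht.1 hmem)
      exact Finset.erase_insert hit
  rw [this, Finset.card_powersetCard, Finset.card_erase_of_mem hi]

lemma sum_powersetCard_sum (A : Finset ℕ) (p : ℕ) (f : ℕ → ℝ) :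
    ∑ s ∈ A.powersetCard (p+1), ∑ i ∈ s, f i
      = ((A.card - 1).choose p : ℝ) * ∑ i ∈ A, f i := by
  classical
  have h1 : ∀ s ∈ A.powersetCard (p+1), ∑ i ∈ s, f i = ∑ i ∈ A, if i ∈ s then f i else 0 := by
    intro s hs
    rw [← Finset.sum_filter]
    congr 1
    have hsub := (Finset.mem_powersetCard.mp hs).1
    ext x
    simp only [Finset.mem_filter]
    exact ⟨fun hx => ⟨hsub hx, hx⟩, fun hx => hx.2⟩
  rw [Finset.sum_congr rfl h1, Finset.sum_comm]
  rw [Finset.mul_sum]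
  refine Finset.sum_congr rfl fun i hi => ?_
  rw [← Finset.sum_filter, Finset.sum_const, filter_powersetCard_card A i hi p]
  simp [nsmul_eq_mul]

lemma uStatSum_linear {Ω : Type*} (m : ℕ) (hm : 0 < m) (g : ℝ → ℝ)
    (X : ℕ → Ω → ℝ) (k : ℕ) (ω : Ω) :
    uStatSum m (fun v => ∑ j : Fin m, g (v j)) X k ω
      = ((k - 1).choose (m-1) : ℝ) * ∑ i ∈ Finset.range k, g (X i ω) := by
  obtain ⟨p, rfl⟩ : ∃ p, m = p + 1 := ⟨m - 1, (Nat.succ_pred_eq_of_pos hm).symm⟩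
  rw [uStatSum]
  rw [Finset.sum_congr rfl
    (fun s _ => sum_orderEmbOfFin_eq s.1 (Finset.mem_powersetCard.mp s.2).2
      (fun i => g (X i ω)))]
  rw [Finset.sum_attach _ (fun s => ∑ i ∈ s, g (X i ω)),
    sum_powersetCard_sum, Finset.card_range]
  simp

lemma choose_algebra {k m : ℕ} (hm : 0 < m) (hmk : m ≤ k) (T : ℝ) :
    (k : ℝ) * ((k.choose m : ℝ))⁻¹ * (((k - 1).choose (m-1) : ℝ) * T) = m * T := by
  have hk : 0 < k := hm.trans_le hmk
  have hch : 0 < k.choose m := Nat.choose_pos hmk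
  have key : k * ((k-1).choose (m-1)) = k.choose m * m := by
    have h := Nat.add_one_mul_choose_eq (k-1) (m-1)
    have e1 : k-1+1 = k := by omega
    have e2 : m-1+1 = m := by omega
    rwa [e1, e2] at h
  have keyR : (k : ℝ) * ((k-1).choose (m-1) : ℝ) = (k.choose m : ℝ) * m := by
    exact_mod_cast congrArg (Nat.cast (R := ℝ)) key
  have hchR : (k.choose m : ℝ) ≠ 0 := Nat.cast_ne_zero.2 hch.ne'
  field_simp
  linear_combination T * keyR

lemma measurable_update_pair {m : ℕ} (i0 : Fin m) :
    Measurable (fun p : ℝ × (Fin m → ℝ) => Function.update p.2 i0 p.1) := by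
  apply measurable_pi_lambda
  intro j
  simp only [Function.update_apply]
  by_cases hj : j = i0
  · simp only [hj, if_true]; exact measurable_fst
  · simp only [hj, if_false]; exact (measurable_pi_apply j).comp measurable_snd

lemma map_update_pi (ν : Measure ℝ) [IsProbabilityMeasure ν] {m : ℕ} (i0 : Fin m) :
    Measure.map (fun p : ℝ × (Fin m → ℝ) => Function.update p.2 i0 p.1)
      (ν.prod (Measure.pi fun _ : Fin m => ν)) = Measure.pi fun _ : Fin m => ν := by
  refine (Measure.pi_eq fun s hs => ?_).symm
  rw [Measure.map_apply (measurable_update_pair i0) (MeasurableSet.univ_pi hs)]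
  have hpre : (fun p : ℝ × (Fin m → ℝ) => Function.update p.2 i0 p.1) ⁻¹'
      (Set.pi Set.univ s)
      = (s i0) ×ˢ (Set.pi Set.univ (Function.update s i0 Set.univ)) := by
    ext p
    simp only [Set.mem_preimage, Set.mem_pi, Set.mem_univ, true_implies, Set.mem_prod,
      Function.update_apply]
    constructor
    · intro H
      refine ⟨by simpa using H i0, fun j => ?_⟩
      by_cases hj : j = i0
      · simp [hj]
      · simpa [hj] using H j
    · intro ⟨h1, h2⟩ j
      by_cases hj : j = i0
      · simpa [hj] using h1
      · have := h2 j; simp [hj] at this ⊢; exact this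
  rw [hpre, Measure.prod_prod, Measure.pi_pi]
  have : ∀ j, ν (Function.update s i0 Set.univ j)
      = Function.update (fun j => ν (s j)) i0 (ν Set.univ) j := by
    intro j
    by_cases hj : j = i0
    · subst hj; simp
    · simp [hj, Function.update_apply]
  rw [Finset.prod_congr rfl (fun j _ => this j), Finset.prod_update_of_mem (Finset.mem_univ i0)]
  rw [measure_univ, one_mul, ← Finset.erase_eq]
  exact Finset.mul_prod_erase Finset.univ (fun j => ν (s j)) (Finset.mem_univ i0)

lemma lintegral_update_pi (ν : Measure ℝ) [IsProbabilityMeasure ν] {m : ℕ} (i0 : Fin m)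
    {G : (Fin m → ℝ) → ℝ≥0∞} (hG : Measurable G) :
    ∫⁻ x, ∫⁻ z, G (Function.update z i0 x) ∂(Measure.pi fun _ : Fin m => ν) ∂ν
      = ∫⁻ z, G z ∂(Measure.pi fun _ : Fin m => ν) := by
  have h1 : ∫⁻ x, ∫⁻ z, G (Function.update z i0 x) ∂(Measure.pi fun _ : Fin m => ν) ∂ν
      = ∫⁻ p, G (Function.update p.2 i0 p.1) ∂(ν.prod (Measure.pi fun _ : Fin m => ν)) :=
    lintegral_lintegral ((hG.comp (measurable_update_pair i0)).aemeasurable)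
  rw [h1, ← lintegral_map hG (measurable_update_pair i0), map_update_pi]

lemma map_tuple_pi {Ω : Type*} [MeasurableSpace Ω] (μ : Measure Ω) [IsProbabilityMeasure μ]
    (X : ℕ → Ω → ℝ) (hXmeas : ∀ i, Measurable (X i))
    (hindep : iIndepFun X μ)
    (hident : ∀ i, IdentDistrib (X i) (X 0) μ μ) (m : ℕ) :
    Measure.map (fun ω (j : Fin m) => X j ω) μ
      = Measure.pi (fun _ : Fin m => μ.map (X 0)) := by
  refine (Measure.pi_eq fun s hs => ?_).symm
  have hmeasT : Measurable (fun ω (j : Fin m) => X j ω) :=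
    measurable_pi_lambda _ fun j => hXmeas j
  rw [Measure.map_apply hmeasT (MeasurableSet.univ_pi hs)]
  classical
  set sets : ℕ → Set ℝ := fun i => if h : i < m then s ⟨i, h⟩ else Set.univ with hsets
  have hpre : (fun ω (j : Fin m) => X j ω) ⁻¹' (Set.pi Set.univ s)
      = ⋂ i ∈ Finset.range m, X i ⁻¹' sets i := by
    ext ω
    simp only [Set.mem_preimage, Set.mem_pi, Set.mem_univ, true_implies, Set.mem_iInter,
      Finset.mem_range, hsets]
    constructor
    · intro H i hi
      simpa [hi] using H ⟨i, hi⟩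
    · intro H j
      have := H j j.2
      simpa [j.2] using this
  rw [hpre, hindep.measure_inter_preimage_eq_mul (Finset.range m)
    (fun i _ => by by_cases hi : i < m <;> simp [hsets, hi, hs])]
  rw [← Fin.prod_univ_eq_prod_range (fun i => μ (X i ⁻¹' sets i)) m]
  refine Finset.prod_congr rfl fun j _ => ?_
  have h1 : sets (j : ℕ) = s j := by simp [hsets, j.2]
  rw [h1, ← Measure.map_apply (hXmeas j) (hs j), (hident j).map_eq,
    Measure.map_apply (hXmeas 0) (hs j)]

lemma trunc_abs_le {n : ℕ} (hn : 1 ≤ n) (a : ℝ) :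
    |if (n:ℝ)^((3:ℝ)/2) < |a| then a else 0|
      ≤ (Real.sqrt n)⁻¹ * (if (n:ℝ)^((3:ℝ)/2) < |a| then |a|^((4:ℝ)/3) else 0) := by
  by_cases hc : (n:ℝ)^((3:ℝ)/2) < |a|
  · simp only [hc, if_true]
    have hn1 : (1:ℝ) ≤ (n:ℝ) := by exact_mod_cast hn
    have hn0 : (0:ℝ) ≤ (n:ℝ) := by linarith
    have hs : 0 < Real.sqrt n := Real.sqrt_pos.2 (by linarith)
    have hapos : 0 < |a| := lt_of_lt_of_le (by positivity) hc.le
    have key : Real.sqrt n * |a| ≤ |a|^((4:ℝ)/3) := by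
      have h13 : Real.sqrt n ≤ |a|^((1:ℝ)/3) := by
        have h1 : ((n:ℝ)^((3:ℝ)/2))^((1:ℝ)/3) ≤ |a|^((1:ℝ)/3) :=
          Real.rpow_le_rpow (by positivity) hc.le (by norm_num)
        have h2 : ((n:ℝ)^((3:ℝ)/2))^((1:ℝ)/3) = (n:ℝ)^((1:ℝ)/2) := by
          rw [← Real.rpow_mul hn0]; norm_num
        have h3 : (n:ℝ)^((1:ℝ)/2) = Real.sqrt n := by
          rw [Real.sqrt_eq_rpow]
        rw [h2, h3] at h1; exact h1
      have h2 : |a|^((4:ℝ)/3) = |a| * |a|^((1:ℝ)/3) := by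
        rw [← Real.rpow_one_add' hapos.le (by norm_num : (1:ℝ) + 1/3 ≠ 0)]
        norm_num
      rw [h2]
      calc Real.sqrt n * |a| ≤ |a|^((1:ℝ)/3) * |a| :=
            mul_le_mul_of_nonneg_right h13 hapos.le
      _ = |a| * |a|^((1:ℝ)/3) := mul_comm _ _
    calc |a| = (Real.sqrt n)⁻¹ * (Real.sqrt n * |a|) := by field_simp
    _ ≤ (Real.sqrt n)⁻¹ * |a|^((4:ℝ)/3) := by
        exact mul_le_mul_of_nonneg_left key (by positivity)
  · simp [hc]

lemma truncTail_eq {Ω : Type*} [MeasurableSpace Ω] (μ : Measure Ω) (m : ℕ)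
    (h : (Fin m → ℝ) → ℝ) (X : ℕ → Ω → ℝ) (n : ℕ) :
    truncTail μ m h X n
      = fun y => trn m h n y - ∫ ω, trn m h n (fun j => X j ω) ∂μ := rfl

lemma trn_meas {m : ℕ} {h : (Fin m → ℝ) → ℝ} (hhmeas : Measurable h) (n : ℕ) :
    Measurable (trn m h n) :=
  Measurable.ite (measurableSet_lt measurable_const hhmeas.abs) hhmeas measurable_const

lemma proj1_eq (m : ℕ) (hm : 0 < m) (h : (Fin m → ℝ) → ℝ) (ν : Measure ℝ) :
    proj1 m hm h ν = fun x =>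
      ∫ z, h (Function.update z ⟨0, hm⟩ x) ∂(Measure.pi fun _ : Fin m => ν) := rfl

lemma proj1_meas (m : ℕ) (hm : 0 < m) {h : (Fin m → ℝ) → ℝ} (hh : Measurable h)
    (ν : Measure ℝ) [IsProbabilityMeasure ν] :
    Measurable (proj1 m hm h ν) := by
  have sm : StronglyMeasurable
      (fun p : ℝ × (Fin m → ℝ) => h (Function.update p.2 ⟨0, hm⟩ p.1)) :=
    (hh.comp (measurable_update_pair ⟨0, hm⟩)).stronglyMeasurable
  exact sm.integral_prod_right'.measurable

lemma key_bound {Ω : Type*} [MeasurableSpace Ω] (μ : Measure Ω) [IsProbabilityMeasure μ]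
    (X : ℕ → Ω → ℝ) (hXmeas : ∀ i, Measurable (X i))
    (hindep : iIndepFun X μ)
    (hident : ∀ i, IdentDistrib (X i) (X 0) μ μ)
    (m : ℕ) (hm : 0 < m) (h : (Fin m → ℝ) → ℝ) (hhmeas : Measurable h) (n i : ℕ) :
    ∫⁻ ω, ENNReal.ofReal |proj1 m hm (truncTail μ m h X n) (μ.map (X 0)) (X i ω)| ∂μ
      ≤ 2 * ∫⁻ ω, ENNReal.ofReal |trn m h n (fun j => X j ω)| ∂μ := by
  haveI : IsProbabilityMeasure (μ.map (X 0)) :=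
    Measure.isProbabilityMeasure_map (hXmeas 0).aemeasurable
  set ν := μ.map (X 0) with hν
  have hTTmeas : Measurable (truncTail μ m h X n) := by
    rw [truncTail_eq]; exact (trn_meas hhmeas n).sub measurable_const
  have hgmeas : Measurable (proj1 m hm (truncTail μ m h X n) ν) :=
    proj1_meas m hm hTTmeas ν
  set c : ℝ := ∫ ω, trn m h n (fun j => X j ω) ∂μ with hc
  set E : ℝ≥0∞ := ∫⁻ ω, ENNReal.ofReal |trn m h n (fun j => X j ω)| ∂μ with hE
  have htuple : Measurable (fun ω (j : Fin m) => X j ω) :=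
    measurable_pi_lambda _ fun j => hXmeas j
  have htrnE : Measurable (fun y => ENNReal.ofReal |trn m h n y|) :=
    (trn_meas hhmeas n).abs.ennreal_ofReal
  have hπE : ∫⁻ y, ENNReal.ofReal |trn m h n y| ∂(Measure.pi fun _ : Fin m => ν)
      = E := by
    rw [hν, ← map_tuple_pi μ X hXmeas hindep hident m, lintegral_map htrnE htuple, hE]
  have hcE : ENNReal.ofReal |c| ≤ E := by
    have h0 := enorm_integral_le_lintegral_enorm (μ := μ)
      (fun ω => trn m h n (fun j => X j ω))
    simpa [Real.enorm_eq_ofReal_abs, ← hc, ← hE] using h0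
  have hpt : ∀ x : ℝ, ENNReal.ofReal |proj1 m hm (truncTail μ m h X n) ν x|
      ≤ (∫⁻ z, ENNReal.ofReal |trn m h n (Function.update z ⟨0, hm⟩ x)|
          ∂(Measure.pi fun _ : Fin m => ν)) + ENNReal.ofReal |c| := by
    intro x
    have h1 : ENNReal.ofReal |proj1 m hm (truncTail μ m h X n) ν x|
        ≤ ∫⁻ z, ENNReal.ofReal |truncTail μ m h X n (Function.update z ⟨0, hm⟩ x)|
          ∂(Measure.pi fun _ : Fin m => ν) := by
      have h0 := enorm_integral_le_lintegral_enorm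
        (μ := (Measure.pi fun _ : Fin m => ν))
        (fun z => truncTail μ m h X n (Function.update z ⟨0, hm⟩ x))
      simpa [Real.enorm_eq_ofReal_abs, proj1] using h0
    refine h1.trans ?_
    have h2 : ∀ z, ENNReal.ofReal |truncTail μ m h X n (Function.update z ⟨0, hm⟩ x)|
        ≤ ENNReal.ofReal |trn m h n (Function.update z ⟨0, hm⟩ x)| + ENNReal.ofReal |c| := by
      intro z
      rw [truncTail_eq]
      refine (ENNReal.ofReal_le_ofReal (abs_sub _ _)).trans ?_
      rw [ENNReal.ofReal_add (abs_nonneg _) (abs_nonneg _)]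
    refine (lintegral_mono h2).trans ?_
    rw [lintegral_add_right _ measurable_const, lintegral_const, measure_univ, mul_one]
  have hstart : ∫⁻ ω, ENNReal.ofReal |proj1 m hm (truncTail μ m h X n) ν (X i ω)| ∂μ
      = ∫⁻ x, ENNReal.ofReal |proj1 m hm (truncTail μ m h X n) ν x| ∂ν := by
    rw [← lintegral_map hgmeas.abs.ennreal_ofReal (hXmeas i), (hident i).map_eq]
  rw [hstart]
  calc ∫⁻ x, ENNReal.ofReal |proj1 m hm (truncTail μ m h X n) ν x| ∂ν
      ≤ ∫⁻ x, ((∫⁻ z, ENNReal.ofReal |trn m h n (Function.update z ⟨0, hm⟩ x)|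
          ∂(Measure.pi fun _ : Fin m => ν)) + ENNReal.ofReal |c|) ∂ν :=
        lintegral_mono hpt
    _ = (∫⁻ x, ∫⁻ z, ENNReal.ofReal |trn m h n (Function.update z ⟨0, hm⟩ x)|
          ∂(Measure.pi fun _ : Fin m => ν) ∂ν) + ENNReal.ofReal |c| := by
        rw [lintegral_add_right _ measurable_const, lintegral_const, measure_univ, mul_one]
    _ = (∫⁻ z, ENNReal.ofReal |trn m h n z| ∂(Measure.pi fun _ : Fin m => ν))
          + ENNReal.ofReal |c| := by
        rw [lintegral_update_pi ν ⟨0, hm⟩ htrnE]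
    _ = E + ENNReal.ofReal |c| := by rw [hπE]
    _ ≤ E + E := add_le_add_right hcE E
    _ = 2 * E := (two_mul E).symm

lemma En_le {Ω : Type*} [MeasurableSpace Ω] (μ : Measure Ω) (m : ℕ)
    (h : (Fin m → ℝ) → ℝ) (X : ℕ → Ω → ℝ) {n : ℕ} (hn : 1 ≤ n) :
    ∫⁻ ω, ENNReal.ofReal |trn m h n (fun j => X j ω)| ∂μ
      ≤ ENNReal.ofReal (Real.sqrt n)⁻¹ *
        ∫⁻ ω, ENNReal.ofReal (if (n:ℝ)^((3:ℝ)/2) < |h (fun j => X j ω)|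
          then |h (fun j => X j ω)|^((4:ℝ)/3) else 0) ∂μ := by
  rw [← lintegral_const_mul' _ _ ENNReal.ofReal_ne_top]
  refine lintegral_mono fun ω => ?_
  rw [← ENNReal.ofReal_mul (by positivity)]
  exact ENNReal.ofReal_le_ofReal (trunc_abs_le hn _)

lemma D_tendsto {Ω : Type*} [MeasurableSpace Ω] (μ : Measure Ω)
    (X : ℕ → Ω → ℝ) (hXmeas : ∀ i, Measurable (X i))
    (m : ℕ) (h : (Fin m → ℝ) → ℝ) (hhmeas : Measurable h)
    (hmom : Integrable (fun ω => |h (fun j => X j ω)| ^ ((4 : ℝ) / 3)) μ) :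
    Tendsto (fun n : ℕ => ∫⁻ ω, ENNReal.ofReal (if (n:ℝ)^((3:ℝ)/2) < |h (fun j => X j ω)|
        then |h (fun j => X j ω)|^((4:ℝ)/3) else 0) ∂μ) atTop (𝓝 0) := by
  have htuple : Measurable (fun ω (j : Fin m) => X j ω) :=
    measurable_pi_lambda _ fun j => hXmeas j
  have hHm : Measurable (fun ω => |h (fun j => X j ω)|) := (hhmeas.comp htuple).abs
  have key := tendsto_lintegral_of_dominated_convergence (μ := μ)
    (F := fun n ω => ENNReal.ofReal (if (n:ℝ)^((3:ℝ)/2) < |h (fun j => X j ω)|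
        then |h (fun j => X j ω)|^((4:ℝ)/3) else 0))
    (f := fun _ => 0)
    (fun ω => ENNReal.ofReal (|h (fun j => X j ω)|^((4:ℝ)/3)))
    (fun n => (Measurable.ite (measurableSet_lt measurable_const hHm)
        (hHm.pow_const _) measurable_const).ennreal_ofReal)
    (fun n => Eventually.of_forall fun ω => ENNReal.ofReal_le_ofReal
      (by split
          · exact le_rfl
          · positivity))
    (by
      have heq : ∀ ω, ENNReal.ofReal (|h (fun j => X j ω)|^((4:ℝ)/3))
          = (‖|h (fun j => X j ω)| ^ ((4:ℝ)/3)‖₊ : ℝ≥0∞) := fun ω => by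
        rw [← enorm_eq_nnnorm, Real.enorm_eq_ofReal_abs, abs_of_nonneg (Real.rpow_nonneg (abs_nonneg _) _)]
      rw [lintegral_congr heq]
      exact hmom.2.ne)
    (Eventually.of_forall fun ω => by
      have hev : ∀ᶠ n : ℕ in atTop,
          ENNReal.ofReal (if (n:ℝ)^((3:ℝ)/2) < |h (fun j => X j ω)|
            then |h (fun j => X j ω)|^((4:ℝ)/3) else 0) = 0 := by
        filter_upwards [eventually_ge_atTop (max 1 ⌈|h (fun j => X j ω)|⌉₊)] with n hn
        have h1 : (1:ℕ) ≤ n := le_trans (le_max_left _ _) hn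
        have h1R : (1:ℝ) ≤ (n:ℝ) := by exact_mod_cast h1
        have h2 : |h (fun j => X j ω)| ≤ (n:ℝ) := by
          refine (Nat.le_ceil _).trans ?_
          exact_mod_cast le_trans (le_max_right _ _) hn
        have h3 : (n:ℝ) ≤ (n:ℝ)^((3:ℝ)/2) := by
          calc (n:ℝ) = (n:ℝ)^(1:ℝ) := (Real.rpow_one _).symm
          _ ≤ _ := Real.rpow_le_rpow_of_exponent_le h1R (by norm_num)
        have hcond : ¬ ((n:ℝ)^((3:ℝ)/2) < |h (fun j => X j ω)|) :=
          not_lt.2 (h2.trans h3)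
        simp [hcond]
      exact Tendsto.congr' (hev.mono fun n hn => hn.symm) tendsto_const_nhds)
  simpa using key

end AuxStmt9



/-- For i.i.d. `X_i` and a symmetric measurable kernel `h` of order
`m ≥ 1` with `E|h|^{4/3} < ∞`, with `h̃^{(2)}_n(x) = E(h^{(2)}_n(X₁,…,X_m) | X₁ = x)` the
first-order projection of the centered truncation tail,
`n^{-1/2} max_{m ≤ k ≤ n} | k C(k,m)^{-1} ∑_{C(k,m)} (h̃^{(2)}_n(X_{i₁}) + … +
h̃^{(2)}_n(X_{i_m})) | → 0` in probability. -/
theorem stmt_9 {Ω : Type*} [MeasurableSpace Ω] (μ : Measure Ω) [IsProbabilityMeasure μ]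
    (X : ℕ → Ω → ℝ) (hXmeas : ∀ i, Measurable (X i))
    (hindep : iIndepFun X μ)
    (hident : ∀ i, IdentDistrib (X i) (X 0) μ μ)
    (m : ℕ) (hm : 0 < m) (h : (Fin m → ℝ) → ℝ) (hhmeas : Measurable h)
    (hsymm : ∀ (σ : Equiv.Perm (Fin m)) (x : Fin m → ℝ), h (x ∘ σ) = h x)
    (hmom : Integrable (fun ω => |h (fun j => X j ω)| ^ ((4 : ℝ) / 3)) μ) :
    TendstoInMeasure μ
      (fun (n : ℕ) ω => (Real.sqrt n)⁻¹ *
        ⨆ k ∈ Finset.Icc m n,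
          |(k : ℝ) * ((k.choose m : ℝ))⁻¹ *
            uStatSum m
              (fun v => ∑ j : Fin m, proj1 m hm (truncTail μ m h X n) (μ.map (X 0)) (v j))
              X k ω|)
      atTop (fun _ => 0) := by
  haveI : IsProbabilityMeasure (μ.map (X 0)) :=
    Measure.isProbabilityMeasure_map (hXmeas 0).aemeasurable
  rw [tendstoInMeasure_iff_dist]
  intro ε hε
  set D : ℕ → ℝ≥0∞ := fun n => ∫⁻ ω, ENNReal.ofReal
      (if (n:ℝ)^((3:ℝ)/2) < |h (fun j => X j ω)|
        then |h (fun j => X j ω)|^((4:ℝ)/3) else 0) ∂μ with hD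
  have hDto : Tendsto D atTop (𝓝 0) := D_tendsto μ X hXmeas m h hhmeas hmom
  have hC_ne_top : (ENNReal.ofReal ε)⁻¹ * (2 * m) ≠ ⊤ := by
    refine ENNReal.mul_ne_top ?_ (ENNReal.mul_ne_top (by norm_num) (ENNReal.natCast_ne_top m))
    exact ENNReal.inv_ne_top.2 (ne_of_gt (ENNReal.ofReal_pos.2 hε))
  have hlim : Tendsto (fun n => (ENNReal.ofReal ε)⁻¹ * (2 * m) * D n) atTop (𝓝 0) := by
    have := ENNReal.Tendsto.const_mul hDto (Or.inr hC_ne_top)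
    simpa using this
  refine tendsto_of_tendsto_of_tendsto_of_le_of_le' tendsto_const_nhds hlim
    (Eventually.of_forall fun n => zero_le) ?_
  filter_upwards [eventually_ge_atTop 1] with n hn
  -- notation
  set g : ℝ → ℝ := proj1 m hm (truncTail μ m h X n) (μ.map (X 0)) with hg
  have hTTmeas : Measurable (truncTail μ m h X n) := by
    rw [truncTail_eq]; exact (trn_meas hhmeas n).sub measurable_const
  have hgmeas : Measurable g := proj1_meas m hm hTTmeas _
  set B : Ω → ℝ := fun ω => (Real.sqrt n)⁻¹ *
      ((m:ℝ) * ∑ i ∈ Finset.range n, |g (X i ω)|) with hB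
  have hBmeasR : Measurable B := by
    apply Measurable.const_mul
    exact (Finset.measurable_sum _ fun i _ => (hgmeas.comp (hXmeas i)).abs).const_mul _
  have hBnn : ∀ ω, 0 ≤ B ω := fun ω => by positivity
  -- pointwise bound
  have hpt : ∀ ω, (Real.sqrt n)⁻¹ *
      (⨆ k ∈ Finset.Icc m n, |(k : ℝ) * ((k.choose m : ℝ))⁻¹ *
        uStatSum m (fun v => ∑ j : Fin m, g (v j)) X k ω|) ≤ B ω := by
    intro ω
    refine mul_le_mul_of_nonneg_left ?_ (by positivity)
    have hBnn' : (0:ℝ) ≤ (m:ℝ) * ∑ i ∈ Finset.range n, |g (X i ω)| := by positivity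
    refine Real.iSup_le (fun k => Real.iSup_le (fun hk => ?_) hBnn') hBnn'
    obtain ⟨hmk, hkn⟩ := Finset.mem_Icc.mp hk
    rw [uStatSum_linear m hm g X k ω, choose_algebra hm hmk, abs_mul, Nat.abs_cast]
    refine mul_le_mul_of_nonneg_left ?_ (Nat.cast_nonneg m)
    refine (Finset.abs_sum_le_sum_abs _ _).trans ?_
    exact Finset.sum_le_sum_of_subset_of_nonneg
      (Finset.range_subset_range.2 hkn) (fun _ _ _ => abs_nonneg _)
  have hexprnn : ∀ ω, 0 ≤ (Real.sqrt n)⁻¹ *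
      (⨆ k ∈ Finset.Icc m n, |(k : ℝ) * ((k.choose m : ℝ))⁻¹ *
        uStatSum m (fun v => ∑ j : Fin m, g (v j)) X k ω|) := by
    intro ω
    have : (0:ℝ) ≤ ⨆ k ∈ Finset.Icc m n, |(k : ℝ) * ((k.choose m : ℝ))⁻¹ *
        uStatSum m (fun v => ∑ j : Fin m, g (v j)) X k ω| :=
      Real.iSup_nonneg fun k => Real.iSup_nonneg fun _ => abs_nonneg _
    positivity
  -- Markov
  have hsub : {ω | ε ≤ dist ((Real.sqrt n)⁻¹ *
      (⨆ k ∈ Finset.Icc m n, |(k : ℝ) * ((k.choose m : ℝ))⁻¹ *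
        uStatSum m (fun v => ∑ j : Fin m, g (v j)) X k ω|)) 0}
      ⊆ {ω | ENNReal.ofReal ε ≤ ENNReal.ofReal (B ω)} := by
    intro ω hω
    simp only [Set.mem_setOf_eq, Real.dist_eq, sub_zero,
      abs_of_nonneg (hexprnn ω)] at hω
    exact ENNReal.ofReal_le_ofReal (hω.trans (hpt ω))
  have hmark := meas_ge_le_lintegral_div (μ := μ)
    (hBmeasR.ennreal_ofReal.aemeasurable)
    (ne_of_gt (ENNReal.ofReal_pos.2 hε)) ENNReal.ofReal_ne_top
  -- lintegral of B bound
  have hsqrtnn : (0:ℝ) ≤ (Real.sqrt n)⁻¹ := by positivity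
  set a : ℝ≥0∞ := ENNReal.ofReal (Real.sqrt n)⁻¹ with ha
  have hIB : ∫⁻ ω, ENNReal.ofReal (B ω) ∂μ ≤ 2 * m * D n := by
    have hBsplit : ∀ ω, ENNReal.ofReal (B ω)
        = a * ((m:ℝ≥0∞) * ∑ i ∈ Finset.range n, ENNReal.ofReal |g (X i ω)|) := by
      intro ω
      rw [hB, ENNReal.ofReal_mul hsqrtnn, ENNReal.ofReal_mul (Nat.cast_nonneg m),
        ENNReal.ofReal_sum_of_nonneg (fun i _ => abs_nonneg _), ENNReal.ofReal_natCast]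
    calc ∫⁻ ω, ENNReal.ofReal (B ω) ∂μ
        = a * ((m:ℝ≥0∞) * ∑ i ∈ Finset.range n,
            ∫⁻ ω, ENNReal.ofReal |g (X i ω)| ∂μ) := by
          rw [lintegral_congr hBsplit, lintegral_const_mul' _ _ ENNReal.ofReal_ne_top,
            lintegral_const_mul' _ _ (by simp),
            lintegral_finset_sum (Finset.range n) (f := fun i ω => ENNReal.ofReal |g (X i ω)|) (fun i _ => ((hgmeas.comp (hXmeas i)).abs.ennreal_ofReal))]
      _ ≤ a * ((m:ℝ≥0∞) * ∑ i ∈ Finset.range n,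
            (2 * (a * D n))) := by
          refine mul_le_mul_right (mul_le_mul_right (Finset.sum_le_sum fun i _ => ?_) _) _
          refine (key_bound μ X hXmeas hindep hident m hm h hhmeas n i).trans ?_
          exact mul_le_mul_right (En_le μ m h X hn) 2
      _ = (a * (n:ℝ≥0∞) * a) * (2 * ((m:ℝ≥0∞) * D n)) := by
          rw [Finset.sum_const, Finset.card_range, nsmul_eq_mul]
          ring
      _ = 2 * m * D n := by
          have hsq : a * (n:ℝ≥0∞) * a = 1 := by
            rw [ha, ← ENNReal.ofReal_natCast n, ← ENNReal.ofReal_mul hsqrtnn,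
              ← ENNReal.ofReal_mul (by positivity)]
            have hs : Real.sqrt n * Real.sqrt n = (n:ℝ) :=
              Real.mul_self_sqrt (Nat.cast_nonneg n)
            have hspos : (0:ℝ) < Real.sqrt n := Real.sqrt_pos.2 (by
              have : (1:ℝ) ≤ (n:ℝ) := by exact_mod_cast hn
              linarith)
            have : (Real.sqrt n)⁻¹ * (n:ℝ) * (Real.sqrt n)⁻¹ = 1 := by
              field_simp
              nlinarith [hs]
            rw [this, ENNReal.ofReal_one]
          rw [hsq, one_mul]
          ring
  calc μ {ω | ε ≤ dist ((Real.sqrt n)⁻¹ *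
      (⨆ k ∈ Finset.Icc m n, |(k : ℝ) * ((k.choose m : ℝ))⁻¹ *
        uStatSum m (fun v => ∑ j : Fin m, g (v j)) X k ω|)) 0}
      ≤ μ {ω | ENNReal.ofReal ε ≤ ENNReal.ofReal (B ω)} := measure_mono hsub
    _ ≤ (∫⁻ ω, ENNReal.ofReal (B ω) ∂μ) / ENNReal.ofReal ε := hmark
    _ ≤ (2 * m * D n) / ENNReal.ofReal ε := by
        exact ENNReal.div_le_div_right hIB _
    _ = (ENNReal.ofReal ε)⁻¹ * (2 * m) * D n := by
        rw [ENNReal.div_eq_inv_mul]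
        ring
end

section
/- Let H be a real-valued random variable with E( |H|^{4/3} log|H| ) < ∞ (in particular E|H|^{4/3} < ∞). Then for any constants C₁, C₂ > 0, n^{-1} (C₁ + C₂ log n) · E( H² · 1{|H| ≤ n^{3/2}} ) → 0 as n → ∞. -/
open MeasureTheory Filter Topology

/-- If `E(|H|^{4/3} log|H|) < ∞` (in particular `E|H|^{4/3} < ∞`) then
for any constants `C₁, C₂ > 0`,
`n⁻¹ (C₁ + C₂ log n) · E(H² · 1{|H| ≤ n^{3/2}}) → 0` as `n → ∞`. -/
theorem stmt_12 {Ω : Type*} [MeasurableSpace Ω] (μ : Measure Ω) [IsProbabilityMeasure μ]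
    (H : Ω → ℝ) (hH : Measurable H)
    (hmom : Integrable (fun ω => |H ω| ^ ((4 : ℝ) / 3) * Real.log |H ω|) μ)
    (C₁ C₂ : ℝ) (hC₁ : 0 < C₁) (hC₂ : 0 < C₂) :
    Tendsto
      (fun n : ℕ => ((n : ℝ))⁻¹ * (C₁ + C₂ * Real.log n) *
        ∫ ω, (if |H ω| ≤ (n : ℝ) ^ ((3 : ℝ) / 2) then H ω ^ 2 else 0) ∂μ)
      atTop (𝓝 0) := by
  have hgmeas : Measurable fun ω => |H ω| ^ ((4:ℝ)/3) := by measurability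
  -- integrability of |H|^{4/3}
  have hg_int : Integrable (fun ω => |H ω| ^ ((4:ℝ)/3)) μ := by
    have hbound : Integrable
        (fun ω => Real.exp ((4:ℝ)/3) + |(|H ω| ^ ((4:ℝ)/3) * Real.log |H ω|)|) μ :=
      (integrable_const _).add hmom.abs
    refine hbound.mono' hgmeas.aestronglyMeasurable ?_
    filter_upwards with ω
    have h0 : (0:ℝ) ≤ |H ω| ^ ((4:ℝ)/3) := Real.rpow_nonneg (abs_nonneg _) _
    rw [Real.norm_eq_abs, abs_of_nonneg h0]
    by_cases h : |H ω| ≤ Real.exp 1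
    · have h1 : |H ω| ^ ((4:ℝ)/3) ≤ Real.exp 1 ^ ((4:ℝ)/3) :=
        Real.rpow_le_rpow (abs_nonneg _) h (by norm_num)
    -- rewrite exp 1 ^ (4/3) = exp (4/3)
      rw [← Real.exp_one_rpow ((4:ℝ)/3)]
      have := abs_nonneg (|H ω| ^ ((4:ℝ)/3) * Real.log |H ω|)
      linarith
    · push_neg at h
      have hlog : 1 ≤ Real.log |H ω| := by
        have := Real.log_le_log (Real.exp_pos 1) h.le
        rwa [Real.log_exp] at this
      have h1 : |H ω| ^ ((4:ℝ)/3) ≤ |H ω| ^ ((4:ℝ)/3) * Real.log |H ω| :=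
        le_mul_of_one_le_right h0 hlog
      have h2 := le_abs_self (|H ω| ^ ((4:ℝ)/3) * Real.log |H ω|)
      have := (Real.exp_pos ((4:ℝ)/3)).le
      linarith
  -- the dominating function G
  set G : Ω → ℝ := fun ω => C₁ * |H ω| ^ ((4:ℝ)/3)
      + C₂ * max (|H ω| ^ ((4:ℝ)/3) * Real.log |H ω|) 0 with hGdef
  have hG_int : Integrable G μ := ((hg_int.const_mul C₁).add (hmom.pos_part.const_mul C₂))
  have hG_nonneg : ∀ ω, 0 ≤ G ω := fun ω => by
    have h0 : (0:ℝ) ≤ |H ω| ^ ((4:ℝ)/3) := Real.rpow_nonneg (abs_nonneg _) _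
    have : (0:ℝ) ≤ max (|H ω| ^ ((4:ℝ)/3) * Real.log |H ω|) 0 := le_max_right _ _
    positivity
  have hGmeas : Measurable G := by
    apply Measurable.add
    · exact hgmeas.const_mul C₁
    · exact ((hgmeas.mul (hH.abs.log)).max measurable_const).const_mul C₂
  -- tail integrals tend to 0
  have hb : Tendsto (fun n : ℕ => ∫ ω, Set.indicator {ω | (n:ℝ) < |H ω|} G ω ∂μ)
      atTop (𝓝 0) := by
    have hmeasset : ∀ n : ℕ, MeasurableSet {ω | (n:ℝ) < |H ω|} := fun n =>
      measurableSet_lt measurable_const hH.abs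
    have h0 : (0:ℝ) = ∫ ω, (0:ℝ) ∂μ := by simp
    rw [h0]
    refine tendsto_integral_of_dominated_convergence G
      (fun n => (hGmeas.indicator (hmeasset n)).aestronglyMeasurable) hG_int ?_ ?_
    · intro n
      filter_upwards with ω
      rw [Real.norm_eq_abs]
      by_cases h : ω ∈ {ω | (n:ℝ) < |H ω|}
      · rw [Set.indicator_of_mem h, abs_of_nonneg (hG_nonneg ω)]
      · rw [Set.indicator_of_notMem h, abs_zero]; exact hG_nonneg ω
    · filter_upwards with ω
      have : ∀ᶠ n : ℕ in atTop, Set.indicator {ω | (n:ℝ) < |H ω|} G ω = 0 := by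
        filter_upwards [eventually_ge_atTop ⌈|H ω|⌉₊] with n hn
        apply Set.indicator_of_notMem
        simp only [Set.mem_setOf_eq, not_lt]
        calc |H ω| ≤ (⌈|H ω|⌉₊ : ℝ) := Nat.le_ceil _
          _ ≤ (n : ℝ) := by exact_mod_cast hn
      exact Tendsto.congr' (this.mono fun n h => h.symm) tendsto_const_nhds
  -- the main coefficient sequence tends to 0
  have ha : Tendsto (fun n : ℕ => (C₁ + C₂ * Real.log n) * (n:ℝ) ^ (-(1:ℝ)/3)
      * ∫ ω, |H ω| ^ ((4:ℝ)/3) ∂μ) atTop (𝓝 0) := by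
    have h1 : Tendsto (fun x : ℝ => (C₁ + C₂ * Real.log x) * x ^ (-(1:ℝ)/3)) atTop (𝓝 0) := by
      have hA : Tendsto (fun x : ℝ => C₁ * x ^ (-((1:ℝ)/3))) atTop (𝓝 (C₁ * 0)) :=
        (tendsto_rpow_neg_atTop (by norm_num)).const_mul C₁
      have hB : Tendsto (fun x : ℝ => C₂ * (Real.log x / x ^ ((1:ℝ)/3))) atTop (𝓝 (C₂ * 0)) :=
        ((isLittleO_log_rpow_atTop (by norm_num : (0:ℝ) < 1/3)).tendsto_div_nhds_zero).const_mul C₂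
      have := hA.add hB
      rw [mul_zero, mul_zero, add_zero] at this
      refine this.congr' ?_
      filter_upwards [eventually_gt_atTop (0:ℝ)] with x hx
      have hxp : (0:ℝ) < x ^ ((1:ℝ)/3) := Real.rpow_pos_of_pos hx _
      rw [show (-1:ℝ)/3 = -((1:ℝ)/3) by norm_num, Real.rpow_neg hx.le]
      field_simp
    have h2 := (h1.comp (tendsto_natCast_atTop_atTop (R := ℝ))).mul_const
      (∫ ω, |H ω| ^ ((4:ℝ)/3) ∂μ)
    rw [zero_mul] at h2
    exact h2
  -- squeeze
  have key := ha.add hb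
  rw [add_zero] at key
  refine tendsto_of_tendsto_of_tendsto_of_le_of_le' tendsto_const_nhds key ?_ ?_
  · -- nonnegativity, eventually
    filter_upwards [eventually_ge_atTop 1] with n hn
    have hc : (0:ℝ) ≤ (n:ℝ)⁻¹ * (C₁ + C₂ * Real.log n) := by
      have := Real.log_natCast_nonneg n
      positivity
    refine mul_nonneg hc (integral_nonneg fun ω => ?_)
    by_cases h : |H ω| ≤ (n : ℝ) ^ ((3:ℝ)/2) <;> simp [h, sq_nonneg]
  · filter_upwards [eventually_ge_atTop 1] with n hn
    have hn0 : (0:ℝ) < (n:ℝ) := by exact_mod_cast hn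
    have hlogn : (0:ℝ) ≤ Real.log n := Real.log_natCast_nonneg n
    have hcpos : (0:ℝ) ≤ C₁ + C₂ * Real.log n := by positivity
    -- pointwise inequality
    have hpt : ∀ ω, (n:ℝ)⁻¹ * (C₁ + C₂ * Real.log n) *
        (if |H ω| ≤ (n : ℝ) ^ ((3:ℝ)/2) then H ω ^ 2 else 0)
        ≤ (C₁ + C₂ * Real.log n) * (n:ℝ) ^ (-(1:ℝ)/3) * |H ω| ^ ((4:ℝ)/3)
          + Set.indicator {ω | (n:ℝ) < |H ω|} G ω := by
      intro ω
      set x := |H ω| with hx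
      have hx0 : 0 ≤ x := abs_nonneg _
      have hg0 : (0:ℝ) ≤ x ^ ((4:ℝ)/3) := Real.rpow_nonneg hx0 _
      have hsplit : H ω ^ 2 = x ^ ((2:ℝ)/3) * x ^ ((4:ℝ)/3) := by
        rw [← Real.rpow_add' hx0 (by norm_num : (2:ℝ)/3 + 4/3 ≠ 0)]
        norm_num
        rw [hx, sq_abs]
      have hterm1 : (0:ℝ) ≤ (C₁ + C₂ * Real.log n) * (n:ℝ) ^ (-(1:ℝ)/3) * x ^ ((4:ℝ)/3) := by
        have : (0:ℝ) ≤ (n:ℝ) ^ (-(1:ℝ)/3) := Real.rpow_nonneg hn0.le _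
        positivity
      by_cases hcase : |H ω| ≤ (n : ℝ) ^ ((3:ℝ)/2)
      · rw [if_pos hcase]
        by_cases hcase2 : x ≤ (n:ℝ)
        · -- |H| ≤ n : bound by the first term
          have hind : (0:ℝ) ≤ Set.indicator {ω | (n:ℝ) < |H ω|} G ω :=
            Set.indicator_nonneg (fun ω _ => hG_nonneg ω) ω
          have h23 : x ^ ((2:ℝ)/3) ≤ (n:ℝ) ^ ((2:ℝ)/3) :=
            Real.rpow_le_rpow hx0 hcase2 (by norm_num)
          have hnn : (n:ℝ)⁻¹ * (n:ℝ) ^ ((2:ℝ)/3) = (n:ℝ) ^ (-(1:ℝ)/3) := by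
            rw [← Real.rpow_neg_one, ← Real.rpow_add hn0]
            norm_num
          have hstep : (n:ℝ)⁻¹ * (C₁ + C₂ * Real.log n) * (x ^ ((2:ℝ)/3) * x ^ ((4:ℝ)/3))
              ≤ (C₁ + C₂ * Real.log n) * (n:ℝ) ^ (-(1:ℝ)/3) * x ^ ((4:ℝ)/3) := by
            rw [← hnn]
            have hninv : (0:ℝ) ≤ (n:ℝ)⁻¹ := by positivity
            calc (n:ℝ)⁻¹ * (C₁ + C₂ * Real.log n) * (x ^ ((2:ℝ)/3) * x ^ ((4:ℝ)/3))
                = (C₁ + C₂ * Real.log n) * ((n:ℝ)⁻¹ * x ^ ((2:ℝ)/3)) * x ^ ((4:ℝ)/3) := by ring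
              _ ≤ (C₁ + C₂ * Real.log n) * ((n:ℝ)⁻¹ * (n:ℝ) ^ ((2:ℝ)/3)) * x ^ ((4:ℝ)/3) := by
                  gcongr
          rw [hsplit]
          linarith
        · -- n < |H| ≤ n^{3/2} : bound by G
          push_neg at hcase2
          have hmem : ω ∈ {ω | (n:ℝ) < |H ω|} := hcase2
          rw [Set.indicator_of_mem hmem]
          have h23 : x ^ ((2:ℝ)/3) ≤ (n:ℝ) := by
            have := Real.rpow_le_rpow hx0 hcase (by norm_num : (0:ℝ) ≤ 2/3)
            rwa [← Real.rpow_mul hn0.le, show (3:ℝ)/2 * (2/3) = 1 by norm_num,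
              Real.rpow_one] at this
          have hlogx : Real.log n ≤ Real.log x := Real.log_le_log hn0 hcase2.le
          have hmax : x ^ ((4:ℝ)/3) * Real.log x
              ≤ max (x ^ ((4:ℝ)/3) * Real.log x) 0 := le_max_left _ _
          have hstep : (n:ℝ)⁻¹ * (C₁ + C₂ * Real.log n) * (x ^ ((2:ℝ)/3) * x ^ ((4:ℝ)/3))
              ≤ (C₁ + C₂ * Real.log n) * x ^ ((4:ℝ)/3) := by
            calc (n:ℝ)⁻¹ * (C₁ + C₂ * Real.log n) * (x ^ ((2:ℝ)/3) * x ^ ((4:ℝ)/3))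
                = (C₁ + C₂ * Real.log n) * x ^ ((4:ℝ)/3) * ((n:ℝ)⁻¹ * x ^ ((2:ℝ)/3)) := by ring
              _ ≤ (C₁ + C₂ * Real.log n) * x ^ ((4:ℝ)/3) * ((n:ℝ)⁻¹ * (n:ℝ)) := by
                  have : (0:ℝ) ≤ (C₁ + C₂ * Real.log n) * x ^ ((4:ℝ)/3) := by positivity
                  have hninv : (0:ℝ) ≤ (n:ℝ)⁻¹ := by positivity
                  gcongr
              _ = (C₁ + C₂ * Real.log n) * x ^ ((4:ℝ)/3) := by
                  rw [inv_mul_cancel₀ hn0.ne', mul_one]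
          have hstep2 : (C₁ + C₂ * Real.log n) * x ^ ((4:ℝ)/3) ≤ G ω := by
            rw [hGdef]
            simp only [← hx]
            have h1 : C₂ * Real.log n * x ^ ((4:ℝ)/3) ≤ C₂ * (x ^ ((4:ℝ)/3) * Real.log x) := by
              rw [mul_assoc, mul_comm (Real.log n)]
              gcongr
            have h2 : C₂ * (x ^ ((4:ℝ)/3) * Real.log x)
                ≤ C₂ * max (x ^ ((4:ℝ)/3) * Real.log x) 0 := by gcongr
            nlinarith
          rw [hsplit]
          linarith
      · rw [if_neg hcase, mul_zero]
        have hind : (0:ℝ) ≤ Set.indicator {ω | (n:ℝ) < |H ω|} G ω :=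
          Set.indicator_nonneg (fun ω _ => hG_nonneg ω) ω
        linarith
    -- now integrate
    have hrhs_int : Integrable (fun ω =>
        (C₁ + C₂ * Real.log n) * (n:ℝ) ^ (-(1:ℝ)/3) * |H ω| ^ ((4:ℝ)/3)
        + Set.indicator {ω | (n:ℝ) < |H ω|} G ω) μ := by
      refine (hg_int.const_mul _).add
        (hG_int.indicator (measurableSet_lt measurable_const hH.abs))
    have hlhs_nonneg : (0 : Ω → ℝ) ≤ᶠ[ae μ] fun ω => (n:ℝ)⁻¹ * (C₁ + C₂ * Real.log n) *
        (if |H ω| ≤ (n : ℝ) ^ ((3:ℝ)/2) then H ω ^ 2 else 0) := by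
      filter_upwards with ω
      simp only [Pi.zero_apply]
      have hc : (0:ℝ) ≤ (n:ℝ)⁻¹ * (C₁ + C₂ * Real.log n) := by positivity
      by_cases h : |H ω| ≤ (n : ℝ) ^ ((3:ℝ)/2) <;> simp [h, sq_nonneg, mul_nonneg hc]
    calc ((n:ℝ))⁻¹ * (C₁ + C₂ * Real.log n) *
          ∫ ω, (if |H ω| ≤ (n : ℝ) ^ ((3:ℝ)/2) then H ω ^ 2 else 0) ∂μ
        = ∫ ω, (n:ℝ)⁻¹ * (C₁ + C₂ * Real.log n) *
            (if |H ω| ≤ (n : ℝ) ^ ((3:ℝ)/2) then H ω ^ 2 else 0) ∂μ := by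
          rw [integral_const_mul]
      _ ≤ ∫ ω, ((C₁ + C₂ * Real.log n) * (n:ℝ) ^ (-(1:ℝ)/3) * |H ω| ^ ((4:ℝ)/3)
            + Set.indicator {ω | (n:ℝ) < |H ω|} G ω) ∂μ :=
          integral_mono_of_nonneg hlhs_nonneg hrhs_int (Filter.Eventually.of_forall hpt)
      _ = (C₁ + C₂ * Real.log n) * (n:ℝ) ^ (-(1:ℝ)/3) * ∫ ω, |H ω| ^ ((4:ℝ)/3) ∂μ
            + ∫ ω, Set.indicator {ω | (n:ℝ) < |H ω|} G ω ∂μ := by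
          rw [integral_add ((hg_int.const_mul _))
            (hG_int.indicator (measurableSet_lt measurable_const hH.abs)),
            integral_const_mul]
end
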